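/- Let Γ be a (discrete) abelian group acting on a measure space (X, 𝒳, μ) by measure-preserving transformations, and suppose F ⊙ A =_ae X for some finite set F ⊂ Γ and measurable A ⊂ X. Then for every integer r coprime to |F|, one has F^r ⊙ A =_ae X, where F^r := { f^r : f ∈ F }; moreover, if A has positive measure then the map f ↦ f^r is injective on F, so |F^r| = |F|. -/

import Mathlib

open MeasureTheory Pointwise

open scoped Classical

set_option linter.unusedSectionVars false

namespace MDL

variable {Γ : Type*} [CommGroup Γ] {X : Type*} [MulAction Γ X]

/-- The number of `f ∈ F` with `(f^s)⁻¹ • x ∈ A`. -/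
noncomputable def cnt (F : Finset Γ) (A : Set X) (s : ℤ) (x : X) : ℕ :=
  (F.filter fun f => (f ^ s)⁻¹ • x ∈ A).card

/-- `x` is generic at exponent `s` : the count is exactly one at every translate of `x`
by an element of the subgroup generated by `F`. -/
def Good (F : Finset Γ) (A : Set X) (s : ℤ) (x : X) : Prop :=
  ∀ g ∈ Subgroup.closure (F : Set Γ), cnt F A s (g • x) = 1

namespace Good

theorem smul {F : Finset Γ} {A : Set X} {s : ℤ} {x : X} (h : Good F A s x) {g : Γ}
    (hg : g ∈ Subgroup.closure (F : Set Γ)) : Good F A s (g • x) := by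
  intro g' hg'
  rw [smul_smul]
  exact h _ (mul_mem hg' hg)

theorem cnt_eq {F : Finset Γ} {A : Set X} {s : ℤ} {x : X} (h : Good F A s x) :
    cnt F A s x = 1 := by
  simpa using h 1 (one_mem _)

end Good

theorem sum_cnt {F : Finset Γ} {A : Set X} {x : X} (h1 : Good F A 1 x) (r : ℤ) :
    ∑ f ∈ F, cnt F A r (f⁻¹ • x) = F.card := by
  have hswap : ∀ f g : Γ, ((g ^ r)⁻¹ • (f⁻¹ • x) ∈ A) ↔ (f⁻¹ • ((g ^ r)⁻¹ • x) ∈ A) := by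
    intro f g
    rw [smul_smul, smul_smul, mul_comm]
  calc ∑ f ∈ F, cnt F A r (f⁻¹ • x)
      = ∑ f ∈ F, ∑ g ∈ F, (if (g ^ r)⁻¹ • (f⁻¹ • x) ∈ A then 1 else 0) := by
        refine Finset.sum_congr rfl fun f _ => ?_
        rw [cnt, ← Nat.cast_id (Finset.filter _ F).card, ← Finset.sum_boole]
    _ = ∑ g ∈ F, ∑ f ∈ F, (if f⁻¹ • ((g ^ r)⁻¹ • x) ∈ A then 1 else 0) := by
        rw [Finset.sum_comm]
        exact Finset.sum_congr rfl fun g _ => Finset.sum_congr rfl fun f _ => by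
          simp only [hswap]
    _ = ∑ g ∈ F, cnt F A 1 ((g ^ r)⁻¹ • x) := by
        refine Finset.sum_congr rfl fun g _ => ?_
        rw [cnt, ← Nat.cast_id (Finset.filter _ F).card, ← Finset.sum_boole]
        simp only [zpow_one]
    _ = ∑ _g ∈ F, 1 := by
        refine Finset.sum_congr rfl fun g hg => ?_
        exact h1 _ (inv_mem (zpow_mem (Subgroup.subset_closure hg) r))
    _ = F.card := by simp

theorem all_eq_one_of_le {s : Finset Γ} {a : Γ → ℕ}
    (h1 : ∀ i ∈ s, 1 ≤ a i) (hsum : ∑ i ∈ s, a i = s.card) : ∀ i ∈ s, a i = 1 := by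
  by_contra h
  push_neg at h
  obtain ⟨i, hi, hne⟩ := h
  have hlt : ∑ _i ∈ s, 1 < ∑ i ∈ s, a i :=
    Finset.sum_lt_sum h1 ⟨i, hi, lt_of_le_of_ne (h1 i hi) (Ne.symm hne)⟩
  simp only [Finset.sum_const, smul_eq_mul, mul_one, hsum] at hlt
  omega

theorem all_eq_one_of_ge {s : Finset Γ} {a : Γ → ℕ}
    (h1 : ∀ i ∈ s, a i ≤ 1) (hsum : ∑ i ∈ s, a i = s.card) : ∀ i ∈ s, a i = 1 := by
  by_contra h
  push_neg at h
  obtain ⟨i, hi, hne⟩ := h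
  have hlt : ∑ i ∈ s, a i < ∑ _i ∈ s, 1 :=
    Finset.sum_lt_sum h1 ⟨i, hi, lt_of_le_of_ne (h1 i hi) hne⟩
  simp only [Finset.sum_const, smul_eq_mul, mul_one, hsum] at hlt
  omega


theorem coverage {F : Finset Γ} {A : Set X} {s : ℤ} {x : X} {p : ℕ} (hp : p.Prime)
    (hn : ¬ p ∣ F.card) (hs : Good F A s x) : 1 ≤ cnt F A (s * p) x := by
  haveI : Fact p.Prime := ⟨hp⟩
  -- the indicator weight
  set χ : Γ → ZMod p := fun g => if g⁻¹ • x ∈ A then 1 else 0 with hχ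
  -- sums of the weight over translated copies of `F^s` are 1
  have chi_sum : ∀ a : Γ, a ∈ Subgroup.closure (F : Set Γ) →
      (∑ f ∈ F, χ (f ^ s * a)) = 1 := by
    intro a ha
    have h1 : ∀ f : Γ, ((f ^ s * a)⁻¹ • x ∈ A) ↔ ((f ^ s)⁻¹ • (a⁻¹ • x) ∈ A) := by
      intro f
      rw [mul_inv, mul_smul]
    simp only [hχ, h1]
    rw [Finset.sum_boole]
    have h2 : cnt F A s (a⁻¹ • x) = 1 := hs a⁻¹ (inv_mem ha)
    rw [cnt] at h2
    rw [h2, Nat.cast_one]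
  -- the monoid algebra over `ZMod p`
  have halg : Function.Injective (algebraMap (ZMod p) (MonoidAlgebra (ZMod p) Γ)) := by
    intro a b hab
    have h : MonoidAlgebra.single (1 : Γ) a = MonoidAlgebra.single (1 : Γ) b := by
      simpa [MonoidAlgebra.coe_algebraMap] using hab
    exact Finsupp.single_injective 1 (congrArg MonoidAlgebra.coeff h)
  haveI : CharP (MonoidAlgebra (ZMod p) Γ) p := charP_of_injective_algebraMap halg p
  set E := Finsupp.linearCombination (ZMod p) χ with hE
  set mass := Finsupp.linearCombination (ZMod p) (fun _ : Γ => (1 : ZMod p)) with hmassdef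
  set t : MonoidAlgebra (ZMod p) Γ := ∑ f ∈ F, MonoidAlgebra.single (f ^ s) 1 with ht
  -- multiplication by t
  have ht_single : ∀ (a : Γ) (b : ZMod p),
      t * MonoidAlgebra.single a b = ∑ f ∈ F, MonoidAlgebra.single (f ^ s * a) b := by
    intro a b
    rw [ht, Finset.sum_mul]
    exact Finset.sum_congr rfl fun f _ => by
      rw [MonoidAlgebra.single_mul_single, one_mul]
  have hEmul : ∀ u : MonoidAlgebra (ZMod p) Γ,
      (∀ g ∈ u.coeff.support, g ∈ Subgroup.closure (F : Set Γ)) → E (t * u).coeff = mass u.coeff := by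
    intro u
    induction u using MonoidAlgebra.induction with
    | zero => intro _; simp
    | single_add a b u ha0 hb0 IH =>
      intro hsupp
      have hasupp : (MonoidAlgebra.single a b + u).coeff.support = insert a u.coeff.support := by
        rw [MonoidAlgebra.coeff_add, MonoidAlgebra.coeff_single, Finsupp.support_add_eq, Finsupp.support_single_ne_zero a hb0]
        · rw [Finset.insert_eq]
        · rw [Finsupp.support_single_ne_zero a hb0]
          simpa using ha0
      have haH : a ∈ Subgroup.closure (F : Set Γ) := hsupp a (by rw [hasupp]; simp)
      have huH : ∀ g ∈ u.coeff.support, g ∈ Subgroup.closure (F : Set Γ) := fun g hg =>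
        hsupp g (by rw [hasupp]; simp [hg])
      rw [mul_add, MonoidAlgebra.coeff_add, MonoidAlgebra.coeff_add, map_add, map_add, IH huH]
      congr 1
      rw [ht_single, MonoidAlgebra.coeff_sum, map_sum]
      simp only [hE, MonoidAlgebra.coeff_single, Finsupp.linearCombination_single, smul_eq_mul]
      rw [← Finset.mul_sum, chi_sum a haH, mul_one]
      simp [hmassdef, MonoidAlgebra.coeff_single, Finsupp.linearCombination_single]
  have hmassmul : ∀ u : MonoidAlgebra (ZMod p) Γ,
      mass (t * u).coeff = (F.card : ZMod p) * mass u.coeff := by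
    intro u
    induction u using MonoidAlgebra.induction with
    | zero => simp
    | single_add a b u ha0 hb0 IH =>
      rw [mul_add, MonoidAlgebra.coeff_add, MonoidAlgebra.coeff_add, map_add, map_add, IH, mul_add]
      congr 1
      rw [ht_single, MonoidAlgebra.coeff_sum, map_sum]
      simp only [hmassdef, MonoidAlgebra.coeff_single, Finsupp.linearCombination_single,
        smul_eq_mul, mul_one, Finset.sum_const, nsmul_eq_mul]
  have hmasspow : ∀ k : ℕ, mass (t ^ k).coeff = (F.card : ZMod p) ^ k := by
    intro k
    induction k with
    | zero =>
      rw [pow_zero, MonoidAlgebra.one_def]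
      simp only [hmassdef, MonoidAlgebra.coeff_single, Finsupp.linearCombination_single,
        smul_eq_mul, mul_one, pow_zero]
    | succ k IH =>
      rw [pow_succ, mul_comm (t ^ k) t, hmassmul, IH, pow_succ, mul_comm]
  have hsuppt : ∀ g ∈ t.coeff.support, g ∈ Subgroup.closure (F : Set Γ) := by
    intro g hg
    rw [ht, MonoidAlgebra.coeff_sum] at hg
    have h := Finsupp.support_finset_sum hg
    rw [Finset.mem_biUnion] at h
    obtain ⟨f, hf, hgf⟩ := h
    have := Finsupp.support_single_subset hgf
    rw [Finset.mem_singleton] at this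
    subst this
    exact zpow_mem (Subgroup.subset_closure hf) s
  have hsupp_pow : ∀ k : ℕ, ∀ g ∈ (t ^ k).coeff.support, g ∈ Subgroup.closure (F : Set Γ) := by
    intro k
    induction k with
    | zero =>
      intro g hg
      have := MonoidAlgebra.support_coeff_one_subset hg
      rw [Finset.mem_one] at this
      subst this
      exact one_mem _
    | succ k IH =>
      intro g hg
      rw [pow_succ] at hg
      have h := MonoidAlgebra.support_coeff_mul_subset _ _ hg
      rw [Finset.mem_mul] at h
      obtain ⟨y, hy, z, hz, rfl⟩ := h
      exact mul_mem (IH y hy) (hsuppt z hz)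
  -- Frobenius
  have hfrob : t ^ p = ∑ f ∈ F, MonoidAlgebra.single (f ^ (s * (p : ℤ))) (1 : ZMod p) := by
    rw [ht, sum_pow_char]
    refine Finset.sum_congr rfl fun f _ => ?_
    rw [MonoidAlgebra.single_pow, one_pow, ← zpow_natCast (f ^ s) p, ← zpow_mul]
  have hE1 : E (t ^ p).coeff = (cnt F A (s * (p : ℤ)) x : ZMod p) := by
    rw [hfrob, MonoidAlgebra.coeff_sum, map_sum]
    simp only [hE, MonoidAlgebra.coeff_single, Finsupp.linearCombination_single, one_smul, hχ]
    rw [Finset.sum_boole, cnt]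
  have hE2 : E (t ^ p).coeff = (F.card : ZMod p) ^ (p - 1) := by
    have hppos : 1 ≤ p := hp.pos
    have hps : t ^ p = t * t ^ (p - 1) := by
      rw [← pow_succ']
      congr 1
      omega
    rw [hps, hEmul _ (hsupp_pow (p - 1)), hmasspow]
  by_contra hcon
  push_neg at hcon
  have h0 : cnt F A (s * (p : ℤ)) x = 0 := by omega
  have hcard : (F.card : ZMod p) ≠ 0 := by
    rw [Ne, ZMod.natCast_eq_zero_iff]
    exact hn
  have : ((0 : ℕ) : ZMod p) = (F.card : ZMod p) ^ (p - 1) := by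
    rw [← h0, ← hE1, hE2]
  rw [Nat.cast_zero] at this
  exact pow_ne_zero _ hcard this.symm


theorem stepA {F : Finset Γ} {A : Set X} {s : ℤ} {x : X} {p : ℕ} (hp : p.Prime)
    (hn : ¬ p ∣ F.card) (h1 : Good F A 1 x) (hs : Good F A s x) :
    Good F A (s * p) x := by
  have hF : F.Nonempty :=
    Finset.card_pos.mp (Nat.pos_of_ne_zero fun h => hn (h ▸ dvd_zero p))
  obtain ⟨f0, hf0⟩ := hF
  have hmem : ∀ f ∈ F, f ∈ Subgroup.closure (F : Set Γ) := fun f hf =>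
    Subgroup.subset_closure hf
  have main : ∀ y : X, Good F A 1 y → Good F A s y → cnt F A (s * p) y = 1 := by
    intro y h1y hsy
    have key : ∀ f ∈ F, cnt F A (s * p) (f⁻¹ • (f0 • y)) = 1 := by
      apply all_eq_one_of_le
      · intro f hf
        have hgood : Good F A s (f⁻¹ • (f0 • y)) := by
          rw [smul_smul]
          exact hsy.smul (mul_mem (inv_mem (hmem f hf)) (hmem f0 hf0))
        exact coverage hp hn hgood
      · exact sum_cnt (h1y.smul (hmem f0 hf0)) (s * p)
    have h := key f0 hf0
    rwa [inv_smul_smul] at h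
  intro g hg
  exact main (g • x) (h1.smul hg) (hs.smul hg)

theorem cnt_neg_le {F : Finset Γ} {A : Set X} {s : ℤ} {x : X} (hs : Good F A s x) :
    cnt F A (-s) x ≤ 1 := by
  rw [cnt]
  apply Finset.card_le_one.mpr
  intro f1 hf1 f2 hf2
  rw [Finset.mem_filter] at hf1 hf2
  have m1 : (f1 ^ s) • x ∈ A := by
    have := hf1.2
    rwa [zpow_neg, inv_inv] at this
  have m2 : (f2 ^ s) • x ∈ A := by
    have := hf2.2
    rwa [zpow_neg, inv_inv] at this
  have hy : cnt F A s ((f1 ^ s * f2 ^ s) • x) = 1 :=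
    hs _ (mul_mem (zpow_mem (Subgroup.subset_closure hf1.1) s)
      (zpow_mem (Subgroup.subset_closure hf2.1) s))
  rw [cnt] at hy
  have e1 : f1 ∈ F.filter fun f => (f ^ s)⁻¹ • ((f1 ^ s * f2 ^ s) • x) ∈ A := by
    rw [Finset.mem_filter]
    refine ⟨hf1.1, ?_⟩
    rw [smul_smul, inv_mul_cancel_left]
    exact m2
  have e2 : f2 ∈ F.filter fun f => (f ^ s)⁻¹ • ((f1 ^ s * f2 ^ s) • x) ∈ A := by
    rw [Finset.mem_filter]
    refine ⟨hf2.1, ?_⟩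
    rw [smul_smul, mul_comm (f1 ^ s) (f2 ^ s), inv_mul_cancel_left]
    exact m1
  exact Finset.card_le_one.mp (le_of_eq hy) f1 e1 f2 e2


theorem stepB {F : Finset Γ} {A : Set X} {s : ℤ} {x : X}
    (h1 : Good F A 1 x) (hs : Good F A s x) : Good F A (-s) x := by
  have hF : F.Nonempty := by
    have h := h1.cnt_eq
    rw [cnt] at h
    obtain ⟨f, hf⟩ := Finset.card_pos.mp (by omega : 0 < (F.filter fun f => (f ^ (1:ℤ))⁻¹ • x ∈ A).card)
    exact ⟨f, (Finset.mem_filter.mp hf).1⟩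
  obtain ⟨f0, hf0⟩ := hF
  have hmem : ∀ f ∈ F, f ∈ Subgroup.closure (F : Set Γ) := fun f hf =>
    Subgroup.subset_closure hf
  have main : ∀ y : X, Good F A 1 y → Good F A s y → cnt F A (-s) y = 1 := by
    intro y h1y hsy
    have key : ∀ f ∈ F, cnt F A (-s) (f⁻¹ • (f0 • y)) = 1 := by
      apply all_eq_one_of_ge
      · intro f hf
        have hgood : Good F A s (f⁻¹ • (f0 • y)) := by
          rw [smul_smul]
          exact hsy.smul (mul_mem (inv_mem (hmem f hf)) (hmem f0 hf0))
        exact cnt_neg_le hgood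
      · exact sum_cnt (h1y.smul (hmem f0 hf0)) (-s)
    have h := key f0 hf0
    rwa [inv_smul_smul] at h
  intro g hg
  exact main (g • x) (h1.smul hg) (hs.smul hg)

theorem good_zero {F : Finset Γ} {A : Set X} {x : X}
    (hcard : F.card = 1) (h1 : Good F A 1 x) : Good F A 0 x := by
  obtain ⟨f0, hF⟩ := Finset.card_eq_one.mp hcard
  have hf0F : f0 ∈ F := by rw [hF]; exact Finset.mem_singleton_self f0
  intro g hg
  have hmem : g • x ∈ A := by
    have h := h1 (f0 * g) (mul_mem (Subgroup.subset_closure hf0F) hg)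
    rw [cnt] at h
    obtain ⟨f, hf⟩ := Finset.card_pos.mp (by omega :
      0 < (F.filter fun f => (f ^ (1:ℤ))⁻¹ • ((f0 * g) • x) ∈ A).card)
    rw [Finset.mem_filter, hF, Finset.mem_singleton] at hf
    obtain ⟨rfl, hfA⟩ := hf
    rwa [zpow_one, mul_smul, inv_smul_smul] at hfA
  rw [cnt]
  rw [show (F.filter fun f => (f ^ (0:ℤ))⁻¹ • (g • x) ∈ A) = F from
    Finset.filter_true_of_mem fun f _ => by simpa using hmem]
  exact hcard

theorem good_of_gcd {F : Finset Γ} {A : Set X} {x : X}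
    (h1 : Good F A 1 x) (r : ℤ) (hr : Int.gcd r (F.card : ℤ) = 1) : Good F A r x := by
  have key : ∀ m : ℕ, 0 < m → Nat.Coprime m F.card → Good F A (m : ℤ) x := by
    intro m
    induction m using Nat.strong_induction_on with
    | _ m IH =>
      intro hm hcop
      rcases eq_or_lt_of_le (show 1 ≤ m from hm) with h1'|h2
      · rw [← h1']
        simpa using h1
      · set q := m.minFac with hq'
        have hq : q.Prime := Nat.minFac_prime (by omega)
        obtain ⟨k, hk⟩ := Nat.minFac_dvd m
        have hk0 : 0 < k := by
          rcases Nat.eq_zero_or_pos k with h|h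
          · exfalso
            rw [h, mul_zero] at hk
            omega
          · exact h
        have hklt : k < m := by
          rw [hk]
          exact (Nat.lt_mul_iff_one_lt_left hk0).mpr hq.one_lt
        have hkcop : Nat.Coprime k F.card :=
          Nat.Coprime.coprime_dvd_left ⟨q, by rw [hk, mul_comm]⟩ hcop
        have hqn : ¬ q ∣ F.card := by
          intro hdvd
          have hqcop : Nat.Coprime q F.card :=
            Nat.Coprime.coprime_dvd_left ⟨k, hk⟩ hcop
          have hq1 : q = 1 := hqcop.eq_one_of_dvd hdvd
          have := hq.two_le
          omega
        have hgk : Good F A (k : ℤ) x := IH k hklt hk0 hkcop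
        have := stepA hq hqn h1 hgk
        have hcast : ((k : ℤ) * (q : ℤ)) = (m : ℤ) := by
          rw [hk]; push_cast; ring
        rwa [hcast] at this
  rcases lt_trichotomy r 0 with hneg|hzero|hpos
  · have hna : Nat.Coprime r.natAbs F.card := by
      have : Int.gcd r (F.card : ℤ) = Nat.gcd r.natAbs F.card := by
        rw [Int.gcd]
        simp
      rwa [this] at hr
    have hg : Good F A ((r.natAbs : ℤ)) x := key r.natAbs (by omega) hna
    have := stepB h1 hg
    rwa [show -((r.natAbs : ℤ)) = r by omega] at this
  · subst hzero
    have hcard : F.card = 1 := by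
      have : Int.gcd 0 (F.card : ℤ) = F.card := by
        rw [Int.gcd]
        simp
      omega
    exact good_zero hcard h1
  · have hna : Nat.Coprime r.natAbs F.card := by
      have : Int.gcd r (F.card : ℤ) = Nat.gcd r.natAbs F.card := by
        rw [Int.gcd]
        simp
      rwa [this] at hr
    have hg : Good F A ((r.natAbs : ℤ)) x := key r.natAbs (by omega) hna
    rwa [show ((r.natAbs : ℤ)) = r by omega] at hg


theorem countable_closure (F : Finset Γ) :
    Set.Countable ((Subgroup.closure (F : Set Γ) : Subgroup Γ) : Set Γ) := by
  set S : Set Γ := (F : Set Γ) ∪ ((F : Set Γ))⁻¹ with hS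
  haveI : Countable ↥S := (F.finite_toSet.union F.finite_toSet.inv).countable.to_subtype
  have hrange : ((Subgroup.closure (F : Set Γ) : Subgroup Γ) : Set Γ) ⊆
      Set.range (fun l : List ↥S => (l.map Subtype.val).prod) := by
    intro x hx
    have hx' : x ∈ Submonoid.closure S := by
      have : x ∈ (Subgroup.closure (F : Set Γ)).toSubmonoid := hx
      rwa [Subgroup.closure_toSubmonoid] at this
    obtain ⟨l, hl, hp⟩ := Submonoid.exists_list_of_mem_closure hx'
    refine ⟨l.attach.map fun y => (⟨y.1, hl y.1 y.2⟩ : ↥S), ?_⟩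
    simp only [List.map_map]
    have : (l.attach.map (Subtype.val ∘ fun y : {z // z ∈ l} => (⟨y.1, hl y.1 y.2⟩ : ↥S)))
        = l := by
      rw [show (Subtype.val ∘ fun y : {z // z ∈ l} => (⟨y.1, hl y.1 y.2⟩ : ↥S))
          = fun y => y.1 from rfl]
      exact List.attach_map_subtype_val l
    rw [this, hp]
  exact (Set.countable_range _).mono hrange

theorem cnt_one_iff {F : Finset Γ} {A : Set X} {x : X} :
    cnt F A 1 x = 1 ↔ ∃! f, f ∈ F ∧ x ∈ f • A := by
  rw [cnt]
  constructor
  · intro h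
    obtain ⟨f, hf⟩ := Finset.card_eq_one.mp h
    have hfmem : f ∈ F.filter fun f => (f ^ (1:ℤ))⁻¹ • x ∈ A := by
      rw [hf]; exact Finset.mem_singleton_self f
    rw [Finset.mem_filter] at hfmem
    refine ⟨f, ⟨hfmem.1, ?_⟩, ?_⟩
    · rw [Set.mem_smul_set_iff_inv_smul_mem]
      simpa using hfmem.2
    · rintro g ⟨hgF, hgA⟩
      have hg : g ∈ F.filter fun f => (f ^ (1:ℤ))⁻¹ • x ∈ A := by
        rw [Finset.mem_filter]
        refine ⟨hgF, ?_⟩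
        rw [Set.mem_smul_set_iff_inv_smul_mem] at hgA
        simpa using hgA
      rw [hf, Finset.mem_singleton] at hg
      exact hg
  · rintro ⟨f, ⟨hfF, hfA⟩, huniq⟩
    rw [Finset.card_eq_one]
    refine ⟨f, ?_⟩
    ext g
    rw [Finset.mem_filter, Finset.mem_singleton]
    constructor
    · rintro ⟨hgF, hgA⟩
      exact huniq g ⟨hgF, by rw [Set.mem_smul_set_iff_inv_smul_mem]; simpa using hgA⟩
    · rintro rfl
      refine ⟨hfF, ?_⟩
      rw [Set.mem_smul_set_iff_inv_smul_mem] at hfA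
      simpa using hfA

theorem cnt_r_of_exu {F : Finset Γ} {A : Set X} {r : ℤ} {x : X}
    (h : cnt F A r x = 1) : ∃! f, f ∈ F ∧ x ∈ f ^ r • A := by
  rw [cnt] at h
  obtain ⟨f, hf⟩ := Finset.card_eq_one.mp h
  have hfmem : f ∈ F.filter fun f => (f ^ r)⁻¹ • x ∈ A := by
    rw [hf]; exact Finset.mem_singleton_self f
  rw [Finset.mem_filter] at hfmem
  refine ⟨f, ⟨hfmem.1, Set.mem_smul_set_iff_inv_smul_mem.mpr hfmem.2⟩, ?_⟩
  rintro g ⟨hgF, hgA⟩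
  have hg : g ∈ F.filter fun f => (f ^ r)⁻¹ • x ∈ A :=
    Finset.mem_filter.mpr ⟨hgF, Set.mem_smul_set_iff_inv_smul_mem.mp hgA⟩
  rw [hf, Finset.mem_singleton] at hg
  exact hg

variable [MeasurableSpace X] {μ : Measure X}

theorem ae_good_one
    (hact : ∀ γ : Γ, MeasurePreserving (fun x => γ • x) μ μ)
    (F : Finset Γ) (A : Set X)
    (htile : ∀ᵐ x ∂μ, ∃! f, f ∈ F ∧ x ∈ f • A) :
    ∀ᵐ x ∂μ, Good F A 1 x := by
  haveI : Countable ↥((Subgroup.closure (F : Set Γ) : Subgroup Γ) : Set Γ) :=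
    (countable_closure F).to_subtype
  have hcnt : ∀ᵐ x ∂μ, cnt F A 1 x = 1 := htile.mono fun x hx => cnt_one_iff.mpr hx
  have hnull : μ {x | ¬ cnt F A 1 x = 1} = 0 := by
    rw [← ae_iff]
    exact hcnt
  have hall : ∀ g : ((Subgroup.closure (F : Set Γ) : Subgroup Γ) : Set Γ),
      ∀ᵐ x ∂μ, cnt F A 1 ((g : Γ) • x) = 1 := by
    intro g
    rw [ae_iff]
    have hpre : {x | ¬ cnt F A 1 ((g : Γ) • x) = 1}
        = (fun x => (g : Γ) • x) ⁻¹' {x | ¬ cnt F A 1 x = 1} := rfl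
    rw [hpre]
    exact (hact (g : Γ)).quasiMeasurePreserving.preimage_null hnull
  have := ae_all_iff.mpr hall
  exact this.mono fun x hx g hg => hx ⟨g, hg⟩


end MDL

/-- **Measurable dilation lemma.**  Let an abelian group `Γ` act on a measure space `(X, μ)`
by measure-preserving transformations, and suppose the translates `f • A`, `f ∈ F`, partition
`X` up to null sets.  Then for every integer `r` coprime to `|F|`, the translates
`f^r • A`, `f ∈ F`, also partition `X` up to null sets; moreover if `A` has positive measure
then `f ↦ f^r` is injective on `F`. -/
theorem measurable_dilation_lemma {Γ : Type*} [CommGroup Γ]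
    {X : Type*} [MeasurableSpace X] (μ : Measure X) [MulAction Γ X]
    (hact : ∀ γ : Γ, MeasurePreserving (fun x => γ • x) μ μ)
    (F : Finset Γ) (A : Set X) (hA : MeasurableSet A)
    (htile : ∀ᵐ x ∂μ, ∃! f, f ∈ F ∧ x ∈ f • A)
    (r : ℤ) (hr : Int.gcd r (F.card : ℤ) = 1) :
    (∀ᵐ x ∂μ, ∃! f, f ∈ F ∧ x ∈ f ^ r • A) ∧
    (0 < μ A → Set.InjOn (fun f => f ^ r) (F : Set Γ)) := by
  have hgood1 : ∀ᵐ x ∂μ, MDL.Good F A 1 x := MDL.ae_good_one hact F A htile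
  have hgood : ∀ᵐ x ∂μ, MDL.cnt F A r x = 1 :=
    hgood1.mono fun x hx => (MDL.good_of_gcd hx r hr).cnt_eq
  constructor
  · exact hgood.mono fun x hx => MDL.cnt_r_of_exu hx
  · intro hApos f1 hf1 f2 hf2 hEq
    simp only at hEq
    by_contra hne
    rw [Finset.mem_coe] at hf1 hf2
    -- the set of points with count one
    set T : Set X := {x | MDL.cnt F A r x = 1} with hT
    have hTnull : μ Tᶜ = 0 := by
      have h := ae_iff.mp hgood
      simpa [hT, Set.compl_setOf] using h
    have hset : (f1 ^ r) • A = (fun y => (f1 ^ r)⁻¹ • y) ⁻¹' A := by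
      ext y
      rw [Set.mem_preimage, Set.mem_smul_set_iff_inv_smul_mem]
    have hμS : μ ((f1 ^ r) • A) = μ A := by
      rw [hset]
      exact (hact ((f1 ^ r)⁻¹)).measure_preimage hA.nullMeasurableSet
    have hnonempty : ((f1 ^ r) • A ∩ T).Nonempty := by
      rcases Set.eq_empty_or_nonempty ((f1 ^ r) • A ∩ T) with hemp|hne'
      · exfalso
        have hsub : (f1 ^ r) • A ⊆ Tᶜ := by
          intro y hy
          intro hyT
          exact Set.eq_empty_iff_forall_notMem.mp hemp y ⟨hy, hyT⟩
        have : μ ((f1 ^ r) • A) = 0 := measure_mono_null hsub hTnull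
        rw [hμS] at this
        exact hApos.ne' this
      · exact hne'
    obtain ⟨x, hxS, hxT⟩ := hnonempty
    have hcnt : MDL.cnt F A r x = 1 := hxT
    rw [MDL.cnt] at hcnt
    have e1 : f1 ∈ F.filter fun f => (f ^ r)⁻¹ • x ∈ A :=
      Finset.mem_filter.mpr ⟨hf1, Set.mem_smul_set_iff_inv_smul_mem.mp hxS⟩
    have e2 : f2 ∈ F.filter fun f => (f ^ r)⁻¹ • x ∈ A := by
      refine Finset.mem_filter.mpr ⟨hf2, ?_⟩
      rw [← hEq]
      exact Set.mem_smul_set_iff_inv_smul_mem.mp hxS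
    exact hne (Finset.card_le_one.mp (le_of_eq hcnt) f1 e1 f2 e2)
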